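/- Let (Ω, Σ) be a measurable space, and let L = Σ be the lattice of measurable sets (ordered by inclusion, with ∧ = ∩, ∨ = ∪, 𝟬 = ∅, 𝟭 = Ω), and X = c₀₀(Σ)/Δ the associated quotient space. Then there is a linear isomorphism from X onto the space 𝒮 of simple functions on (Ω, Σ) (the linear span of indicator functions 1_A of measurable sets A inside the functions Ω → ℝ), determined by 1 ⊗ A ↦ 1_A; equivalently, the map ∑ᵢ aᵢ 1_{Aᵢ} ↦ ∑ᵢ aᵢ ⊗ Aᵢ is a well-defined linear bijection 𝒮 → X. -/

import Mathlib

/-- The subspace `Δ ⊆ c₀₀(L)` spanned by `e_𝟬` and the vectors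
`(e_A + e_B) − (e_{A∨B} + e_{A∧B})`. -/
noncomputable def deltaSpan (L : Type*) [Lattice L] [BoundedOrder L] :
    Submodule ℝ (L →₀ ℝ) :=
  Submodule.span ℝ
    ({Finsupp.single (⊥ : L) (1 : ℝ)} ∪
      {f : L →₀ ℝ | ∃ A B : L,
        f = Finsupp.single A 1 + Finsupp.single B 1
          - (Finsupp.single (A ⊔ B) 1 + Finsupp.single (A ⊓ B) 1)})

/-- The quotient space `X = c₀₀(L)/Δ`. -/
abbrev XSpace (L : Type*) [Lattice L] [BoundedOrder L] :=
  (L →₀ ℝ) ⧸ deltaSpan L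

/-- The element `a ⊗ A := q(a·e_A)` of `X`. -/
noncomputable def tens (L : Type*) [Lattice L] [BoundedOrder L] (a : ℝ) (A : L) :
    XSpace L :=
  Submodule.Quotient.mk (Finsupp.single A a)

open Finsupp Submodule

section QuotientLemmas

variable {L : Type*} [Lattice L] [BoundedOrder L]

lemma mk_single_bot (a : ℝ) :
    (Submodule.Quotient.mk (Finsupp.single (⊥ : L) a) : XSpace L) = 0 := by
  rw [Submodule.Quotient.mk_eq_zero]
  have h : Finsupp.single (⊥ : L) a = a • Finsupp.single (⊥ : L) (1 : ℝ) := by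
    rw [Finsupp.smul_single, smul_eq_mul, mul_one]
  rw [h]
  exact Submodule.smul_mem _ _ (Submodule.subset_span (Or.inl rfl))

lemma mk_single_sup_disjoint {A B : L} (h : Disjoint A B) :
    (Submodule.Quotient.mk (Finsupp.single (A ⊔ B) (1 : ℝ)) : XSpace L)
      = Submodule.Quotient.mk (Finsupp.single A 1)
        + Submodule.Quotient.mk (Finsupp.single B 1) := by
  have hrel : (Submodule.Quotient.mk (Finsupp.single A (1:ℝ) + Finsupp.single B 1) : XSpace L)
      = Submodule.Quotient.mk (Finsupp.single (A ⊔ B) 1 + Finsupp.single (A ⊓ B) 1) := by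
    rw [Submodule.Quotient.eq]
    exact Submodule.subset_span (Or.inr ⟨A, B, rfl⟩)
  rw [Submodule.Quotient.mk_add, Submodule.Quotient.mk_add, h.eq_bot, mk_single_bot,
    add_zero] at hrel
  exact hrel.symm

end QuotientLemmas

section SupAdditive

variable {L : Type*} [DistribLattice L] [BoundedOrder L]

lemma mk_single_finset_sup {ι : Type*} (s : Finset ι) (B : ι → L)
    (h : ∀ i ∈ s, ∀ j ∈ s, i ≠ j → Disjoint (B i) (B j)) :
    (Submodule.Quotient.mk (Finsupp.single (s.sup B) (1 : ℝ)) : XSpace L)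
      = ∑ i ∈ s, Submodule.Quotient.mk (Finsupp.single (B i) 1) := by
  induction s using Finset.cons_induction with
  | empty => simpa using mk_single_bot (L := L) 1
  | cons a s ha ih =>
    have hdisj : Disjoint (B a) (s.sup B) := by
      rw [Finset.disjoint_sup_right]
      intro i hi
      exact h a (Finset.mem_cons_self a s) i (Finset.mem_cons.mpr (Or.inr hi))
        (fun e => ha (e ▸ hi))
    rw [Finset.sup_cons, Finset.sum_cons, mk_single_sup_disjoint hdisj,
      ih (fun i hi j hj hij => h i (Finset.mem_cons.mpr (Or.inr hi)) j
        (Finset.mem_cons.mpr (Or.inr hj)) hij)]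

end SupAdditive

section Atoms

open scoped Classical

variable {Ω : Type*} [MeasurableSpace Ω]

local notation "MSet" => {s : Set Ω // MeasurableSet s}

/-- The atom of the finite family `s` determined by the subfamily `t`. -/
noncomputable def atomOf (s t : Finset MSet) : MSet :=
  t.inf id ⊓ (s \ t).inf compl

lemma mem_coe_finset_inf {ω : Ω} (t : Finset MSet) (g : MSet → MSet) :
    ω ∈ ((t.inf g : MSet) : Set Ω) ↔ ∀ B ∈ t, ω ∈ (g B : Set Ω) := by
  induction t using Finset.induction_on with
  | empty => simp [MeasurableSet.coe_top]
  | insert _ _ ha ih =>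
    rw [Finset.inf_insert]
    simp only [MeasurableSet.inf_eq_inter, MeasurableSet.coe_inter, Set.mem_inter_iff, ih,
      Finset.mem_insert]
    constructor
    · rintro ⟨h1, h2⟩ B (rfl | hB)
      · exact h1
      · exact h2 B hB
    · intro hB
      exact ⟨hB _ (Or.inl rfl), fun B hB' => hB B (Or.inr hB')⟩

lemma le_subset {a b : MSet} (h : a ≤ b) {ω : Ω} (hω : ω ∈ (a : Set Ω)) :
    ω ∈ (b : Set Ω) := h hω

lemma atomOf_le_of_mem {s t : Finset MSet} {A : MSet} (hA : A ∈ t) : atomOf s t ≤ A :=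
  inf_le_left.trans (Finset.inf_le hA)

lemma atomOf_le_compl {s t : Finset MSet} {A : MSet} (hA : A ∈ s) (hA' : A ∉ t) :
    atomOf s t ≤ Aᶜ :=
  inf_le_right.trans (Finset.inf_le (Finset.mem_sdiff.mpr ⟨hA, hA'⟩))

lemma atomOf_disjoint {s t t' : Finset MSet} (ht : t ⊆ s) (ht' : t' ⊆ s) (hne : t ≠ t') :
    Disjoint (atomOf s t) (atomOf s t') := by
  have : ∃ A, (A ∈ t ∧ A ∉ t') ∨ (A ∈ t' ∧ A ∉ t) := by
    by_contra hc
    push_neg at hc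
    exact hne (Finset.ext fun A => ⟨(hc A).1, (hc A).2⟩)
  obtain ⟨A, ⟨h1, h2⟩ | ⟨h1, h2⟩⟩ := this
  · exact disjoint_compl_right.mono (atomOf_le_of_mem h1) (atomOf_le_compl (ht h1) h2)
  · exact disjoint_compl_left.mono (atomOf_le_compl (ht' h1) h2) (atomOf_le_of_mem h1)

lemma sup_atomOf {s : Finset MSet} {A : MSet} (hA : A ∈ s) :
    ((s.powerset.filter fun t => A ∈ t).sup (atomOf s)) = A := by
  apply le_antisymm
  · exact Finset.sup_le fun t ht => atomOf_le_of_mem (Finset.mem_filter.mp ht).2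
  · intro ω hω
    set t : Finset MSet := s.filter (fun B => ω ∈ (B : Set Ω)) with ht_def
    have htmem : t ∈ s.powerset.filter fun t => A ∈ t := by
      refine Finset.mem_filter.mpr ⟨Finset.mem_powerset.mpr (Finset.filter_subset _ _), ?_⟩
      exact Finset.mem_filter.mpr ⟨hA, hω⟩
    have hω_atom : ω ∈ ((atomOf s t : MSet) : Set Ω) := by
      show ω ∈ ((t.inf id ⊓ (s \ t).inf compl : MSet) : Set Ω)
      rw [MeasurableSet.inf_eq_inter, MeasurableSet.coe_inter]
      constructor
      · rw [mem_coe_finset_inf]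
        intro B hB
        exact (Finset.mem_filter.mp hB).2
      · rw [mem_coe_finset_inf]
        intro B hB
        have hB' := Finset.mem_sdiff.mp hB
        have : ω ∉ (B : Set Ω) := fun hc => hB'.2 (Finset.mem_filter.mpr ⟨hB'.1, hc⟩)
        rw [MeasurableSet.coe_compl]
        exact this
    exact le_subset (Finset.le_sup htmem) hω_atom

/-- The key combinatorial lemma: a linear dependence among indicators forces the
corresponding combination of `e_A`'s to vanish in the quotient. -/
lemma key_lemma (s : Finset MSet) (c : MSet → ℝ)
    (h : ∑ A ∈ s, c A • (A : Set Ω).indicator (fun _ => (1 : ℝ)) = 0) :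
    ∑ A ∈ s, c A • (Submodule.Quotient.mk (Finsupp.single A (1:ℝ)) : XSpace MSet) = 0 := by
  have hstep1 : ∀ A ∈ s,
      (Submodule.Quotient.mk (Finsupp.single A (1:ℝ)) : XSpace MSet)
        = ∑ t ∈ s.powerset.filter (fun t => A ∈ t),
            Submodule.Quotient.mk (Finsupp.single (atomOf s t) (1:ℝ)) := by
    intro A hA
    have hd := mk_single_finset_sup (L := MSet) (s.powerset.filter fun t => A ∈ t) (atomOf s)
      (fun t ht t' ht' hne =>
        atomOf_disjoint (Finset.mem_powerset.mp (Finset.mem_filter.mp ht).1)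
          (Finset.mem_powerset.mp (Finset.mem_filter.mp ht').1) hne)
    rw [sup_atomOf hA] at hd
    exact hd
  calc ∑ A ∈ s, c A • (Submodule.Quotient.mk (Finsupp.single A (1:ℝ)) : XSpace MSet)
      = ∑ A ∈ s, ∑ t ∈ s.powerset, (if A ∈ t then
          c A • (Submodule.Quotient.mk (Finsupp.single (atomOf s t) (1:ℝ)) : XSpace MSet)
          else 0) := by
        refine Finset.sum_congr rfl fun A hA => ?_
        rw [hstep1 A hA, Finset.smul_sum, ← Finset.sum_filter]
    _ = ∑ t ∈ s.powerset, (∑ A ∈ t, c A) •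
          (Submodule.Quotient.mk (Finsupp.single (atomOf s t) (1:ℝ)) : XSpace MSet) := by
        rw [Finset.sum_comm]
        refine Finset.sum_congr rfl fun t ht => ?_
        rw [Finset.sum_smul]
        have hts : t ⊆ s := Finset.mem_powerset.mp ht
        rw [← Finset.sum_filter, Finset.filter_mem_eq_inter,
          Finset.inter_eq_right.mpr hts]
    _ = 0 := by
        refine Finset.sum_eq_zero fun t ht => ?_
        by_cases hbot : atomOf s t = ⊥
        · rw [hbot, mk_single_bot (L := MSet), smul_zero]
        · have hne : ((atomOf s t : MSet) : Set Ω).Nonempty := by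
            rw [Set.nonempty_iff_ne_empty]
            intro hc
            exact hbot (Subtype.ext hc)
          obtain ⟨ω, hω⟩ := hne
          have hts : t ⊆ s := Finset.mem_powerset.mp ht
          have hmem : ∀ B ∈ s, (ω ∈ (B : Set Ω) ↔ B ∈ t) := by
            intro B hB
            constructor
            · intro hωB
              by_contra hBt
              have hc2 := le_subset (atomOf_le_compl hB hBt) hω
              rw [MeasurableSet.coe_compl] at hc2
              exact hc2 hωB
            · intro hBt
              exact le_subset (atomOf_le_of_mem hBt) hω
          have heval := congrFun h ω
          simp only [Finset.sum_apply, Pi.smul_apply, Set.indicator_apply, Pi.zero_apply,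
            smul_eq_mul, mul_ite, mul_one, mul_zero] at heval
          have hsum : ∑ A ∈ t, c A = 0 := by
            calc ∑ A ∈ t, c A = ∑ A ∈ s.filter (· ∈ t), c A := by
                  rw [Finset.filter_mem_eq_inter, Finset.inter_eq_right.mpr hts]
              _ = ∑ A ∈ s, if A ∈ t then c A else 0 := Finset.sum_filter _ _
              _ = ∑ A ∈ s, if ω ∈ (A : Set Ω) then c A else 0 :=
                  Finset.sum_congr rfl fun A hA => by
                    by_cases hc : A ∈ t
                    · rw [if_pos hc, if_pos ((hmem A hA).mpr hc)]
                    · rw [if_neg hc, if_neg fun hw => hc ((hmem A hA).mp hw)]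
              _ = 0 := heval
          rw [hsum, zero_smul]

end Atoms

/-- For a measurable space `(Ω, Σ)` and `L = Σ` the bounded lattice of
measurable sets, the quotient space `X = c₀₀(Σ)/Δ` is linearly isomorphic to the space
`𝒮` of simple functions (the span of indicators of measurable sets), via the linear
isomorphism determined by `1 ⊗ A ↦ 1_A`. -/
theorem xSpace_equiv_simpleFunctions (Ω : Type*) [MeasurableSpace Ω] :
    ∃ T : XSpace {s : Set Ω // MeasurableSet s} ≃ₗ[ℝ]
        ↥(Submodule.span ℝ
          {f : Ω → ℝ | ∃ s : Set Ω, MeasurableSet s ∧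
            f = s.indicator (fun _ => (1 : ℝ))}),
      ∀ A : {s : Set Ω // MeasurableSet s},
        ((T (tens {s : Set Ω // MeasurableSet s} 1 A) : Ω → ℝ))
          = (A : Set Ω).indicator (fun _ => (1 : ℝ)) := by
  set L := {s : Set Ω // MeasurableSet s}
  set tot : (L →₀ ℝ) →ₗ[ℝ] (Ω → ℝ) :=
    Finsupp.linearCombination ℝ (fun A : L => (A : Set Ω).indicator (fun _ => (1 : ℝ)))
    with htot
  -- Δ is contained in the kernel of `tot`
  have hΔker : deltaSpan L ≤ LinearMap.ker tot := by
    rw [deltaSpan, Submodule.span_le]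
    rintro f (rfl | ⟨A, B, rfl⟩)
    · simp only [SetLike.mem_coe, LinearMap.mem_ker, htot, Finsupp.linearCombination_single]
      have hb : ((⊥ : L) : Set Ω) = ∅ := rfl
      rw [hb]
      funext ω
      simp
    · simp only [SetLike.mem_coe, LinearMap.mem_ker, htot, map_sub, map_add,
        Finsupp.linearCombination_single, one_smul, sub_eq_zero]
      funext ω
      have hsupm : ω ∈ ((A ⊔ B : L) : Set Ω) ↔ ω ∈ (A : Set Ω) ∨ ω ∈ (B : Set Ω) := Iff.rfl
      have hinfm : ω ∈ ((A ⊓ B : L) : Set Ω) ↔ ω ∈ (A : Set Ω) ∧ ω ∈ (B : Set Ω) := Iff.rfl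
      by_cases hA : ω ∈ (A : Set Ω) <;> by_cases hB : ω ∈ (B : Set Ω) <;>
        simp [Set.indicator_apply, hsupm, hinfm, hA, hB]
  -- the kernel of `tot` is contained in Δ
  have hkerΔ : LinearMap.ker tot ≤ deltaSpan L := by
    intro f hf
    rw [LinearMap.mem_ker] at hf
    rw [← Submodule.Quotient.mk_eq_zero]
    have hrepr : (Submodule.Quotient.mk f : XSpace L)
        = ∑ A ∈ f.support, f A • (Submodule.Quotient.mk (Finsupp.single A (1:ℝ)) : XSpace L) := by
      conv_lhs => rw [← Finsupp.sum_single f]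
      rw [Finsupp.sum]
      rw [← Submodule.mkQ_apply, map_sum]
      refine Finset.sum_congr rfl fun A hA => ?_
      rw [Submodule.mkQ_apply]
      have : Finsupp.single A (f A) = f A • Finsupp.single A (1:ℝ) := by
        rw [Finsupp.smul_single, smul_eq_mul, mul_one]
      rw [this, ← Submodule.mkQ_apply, map_smul, Submodule.mkQ_apply]
    have h2 : ∑ A ∈ f.support, f A • (A : Set Ω).indicator (fun _ => (1:ℝ)) = 0 := by
      have he : tot f = ∑ A ∈ f.support, f A • (A : Set Ω).indicator (fun _ => (1:ℝ)) := by
        simp [htot, Finsupp.linearCombination_apply, Finsupp.sum]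
      rw [← he]
      exact hf
    rw [hrepr]
    exact key_lemma _ _ h2
  -- build the linear equivalence
  have hginj : Function.Injective (Submodule.liftQ (deltaSpan L) tot hΔker) := by
    rw [← LinearMap.ker_eq_bot]
    exact Submodule.ker_liftQ_eq_bot _ _ _ hkerΔ
  have hrange : LinearMap.range (Submodule.liftQ (deltaSpan L) tot hΔker)
      = Submodule.span ℝ
          {f : Ω → ℝ | ∃ s : Set Ω, MeasurableSet s ∧
            f = s.indicator (fun _ => (1 : ℝ))} := by
    rw [Submodule.range_liftQ, htot, Finsupp.range_linearCombination]
    congr 1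
    ext f
    constructor
    · rintro ⟨A, rfl⟩
      exact ⟨A, A.2, rfl⟩
    · rintro ⟨s, hs, rfl⟩
      exact ⟨⟨s, hs⟩, rfl⟩
  refine ⟨(LinearEquiv.ofInjective _ hginj).trans (LinearEquiv.ofEq _ _ hrange), fun A => ?_⟩
  show ((LinearEquiv.ofEq _ _ hrange)
      ((LinearEquiv.ofInjective _ hginj) (tens L 1 A)) : Ω → ℝ) = _
  rw [LinearEquiv.coe_ofEq_apply]
  rw [LinearEquiv.ofInjective_apply]
  show Submodule.liftQ (deltaSpan L) tot hΔker (Submodule.Quotient.mk (Finsupp.single A 1)) = _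
  rw [Submodule.liftQ_apply, htot, Finsupp.linearCombination_single, one_smul]
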